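/- Let p, q, n be natural numbers with p + q = 2n + 1 and with p − q + 1 congruent to 2 modulo 8 (as integers). Then the real Clifford algebra Cl_{p,q}(ℝ) is isomorphic, as an ℝ-algebra, to the product algebra M_{2^n}(ℝ) × M_{2^n}(ℝ). -/

import Mathlib

/-- The quadratic form of signature `(p, q)` on `Fin (p+q) → ℝ`:
`Q(v) = ∑_{i < p} v i ^ 2 - ∑_{p ≤ i < p+q} v i ^ 2`. -/
noncomputable def Qpq (p q : ℕ) : QuadraticForm ℝ (Fin (p + q) → ℝ) :=
  QuadraticMap.weightedSumSquares ℝ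
    (fun i : Fin (p + q) => if (i : ℕ) < p then (1 : ℝ) else -1)


set_option linter.unusedSectionVars false
set_option maxHeartbeats 1000000

namespace CliffProof
variable {A : Type*} [Ring A]

/-- 2×2 letter combinators -/
def LI (a : A) : Matrix (Fin 2) (Fin 2) A := !![a, 0; 0, a]
def LX (a : A) : Matrix (Fin 2) (Fin 2) A := !![0, a; a, 0]
def LY (a : A) : Matrix (Fin 2) (Fin 2) A := !![0, -a; a, 0]
def LZ (a : A) : Matrix (Fin 2) (Fin 2) A := !![a, 0; 0, -a]

@[simp] theorem LI_LI (a b : A) : LI a * LI b = LI (a * b) := by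
  simp [LI, Matrix.mul_fin_two]
@[simp] theorem LI_LX (a b : A) : LI a * LX b = LX (a * b) := by
  simp [LI, LX, Matrix.mul_fin_two]
@[simp] theorem LI_LY (a b : A) : LI a * LY b = LY (a * b) := by
  simp [LI, LY, Matrix.mul_fin_two]
@[simp] theorem LI_LZ (a b : A) : LI a * LZ b = LZ (a * b) := by
  simp [LI, LZ, Matrix.mul_fin_two]
@[simp] theorem LX_LI (a b : A) : LX a * LI b = LX (a * b) := by
  simp [LI, LX, Matrix.mul_fin_two]
@[simp] theorem LY_LI (a b : A) : LY a * LI b = LY (a * b) := by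
  simp [LI, LY, Matrix.mul_fin_two]
@[simp] theorem LZ_LI (a b : A) : LZ a * LI b = LZ (a * b) := by
  simp [LI, LZ, Matrix.mul_fin_two]
@[simp] theorem LX_LX (a b : A) : LX a * LX b = LI (a * b) := by
  simp [LI, LX, Matrix.mul_fin_two]
@[simp] theorem LY_LY (a b : A) : LY a * LY b = LI (-(a * b)) := by
  simp [LI, LY, Matrix.mul_fin_two]
@[simp] theorem LZ_LZ (a b : A) : LZ a * LZ b = LI (a * b) := by
  simp [LI, LZ, Matrix.mul_fin_two]
@[simp] theorem LX_LY (a b : A) : LX a * LY b = LZ (a * b) := by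
  simp [LZ, LX, LY, Matrix.mul_fin_two]
@[simp] theorem LY_LX (a b : A) : LY a * LX b = LZ (-(a * b)) := by
  simp [LZ, LX, LY, Matrix.mul_fin_two]
@[simp] theorem LX_LZ (a b : A) : LX a * LZ b = LY (a * b) := by
  simp [LY, LX, LZ, Matrix.mul_fin_two]
@[simp] theorem LZ_LX (a b : A) : LZ a * LX b = LY (-(a * b)) := by
  simp [LY, LX, LZ, Matrix.mul_fin_two]
@[simp] theorem LY_LZ (a b : A) : LY a * LZ b = LX (a * b) := by
  simp [LX, LY, LZ, Matrix.mul_fin_two]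
@[simp] theorem LZ_LY (a b : A) : LZ a * LY b = LX (-(a * b)) := by
  simp [LX, LY, LZ, Matrix.mul_fin_two]

@[simp] theorem LI_neg (a : A) : LI (-a) = -(LI a) := by ext i j; fin_cases i <;> fin_cases j <;> simp [LI]
@[simp] theorem LX_neg (a : A) : LX (-a) = -(LX a) := by ext i j; fin_cases i <;> fin_cases j <;> simp [LX]
@[simp] theorem LY_neg (a : A) : LY (-a) = -(LY a) := by ext i j; fin_cases i <;> fin_cases j <;> simp [LY]
@[simp] theorem LZ_neg (a : A) : LZ (-a) = -(LZ a) := by ext i j; fin_cases i <;> fin_cases j <;> simp [LZ]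

@[simp] theorem LI_one : LI (1 : A) = 1 := by
  rw [Matrix.one_fin_two]; rfl



/-- An anticommuting family realizing signature (p,q). -/
structure IsACF {p q : ℕ} (G : Fin p → A) (H : Fin q → A) : Prop where
  gg : ∀ i j, i ≠ j → G i * G j = -(G j * G i)
  hh : ∀ i j, i ≠ j → H i * H j = -(H j * H i)
  gh : ∀ i j, G i * H j = -(H j * G i)
  gsq : ∀ i, G i * G i = 1
  hsq : ∀ j, H j * H j = -1

theorem base10 : IsACF (fun _ : Fin 1 => (1 : A)) (Fin.elim0) where
  gg := fun i j hij => absurd (Subsingleton.elim i j) hij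
  hh := fun i => i.elim0
  gh := fun _ j => j.elim0
  gsq := fun _ => one_mul 1
  hsq := fun j => j.elim0

/-- The seven generators for Cl(0,7). -/
def C7 : Fin 7 → Matrix (Fin 2) (Fin 2) (Matrix (Fin 2) (Fin 2) (Matrix (Fin 2) (Fin 2) A))
  | 0 => LI (LI (LY 1))
  | 1 => LI (LY (LX 1))
  | 2 => LX (LY (LZ 1))
  | 3 => LY (LI (LZ 1))
  | 4 => LY (LX (LX 1))
  | 5 => LY (LZ (LX 1))
  | 6 => LZ (LY (LZ 1))

theorem base07 : IsACF (Fin.elim0) (C7 (A := A)) where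
  gg := fun i => i.elim0
  hh := by intro i j hij; fin_cases i <;> fin_cases j <;> simp_all [C7]
  gh := fun i => i.elim0
  gsq := fun i => i.elim0
  hsq := by intro j; fin_cases j <;> simp [C7]


section Steps
variable {p q : ℕ} {G : Fin p → A} {H : Fin q → A}

theorem succ_ne {n : ℕ} {i j : Fin n} (h : Fin.succ i ≠ Fin.succ j) : i ≠ j :=
  fun e => h (by rw [e])

/-- Step (p,q) → (p+1,q+1). -/
theorem stepA (hf : IsACF G H) :
    IsACF (Fin.cons (LZ (1 : A)) (fun i => LX (G i)))
      (Fin.cons (LY (1 : A)) (fun j => LX (H j))) where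
  gg := by
    intro i j hij
    induction i using Fin.cases with
    | zero =>
      induction j using Fin.cases with
      | zero => exact absurd rfl hij
      | succ j => simp
    | succ i =>
      induction j using Fin.cases with
      | zero => simp
      | succ j => simp [hf.gg i j (succ_ne hij)]
  hh := by
    intro i j hij
    induction i using Fin.cases with
    | zero =>
      induction j using Fin.cases with
      | zero => exact absurd rfl hij
      | succ j => simp
    | succ i =>
      induction j using Fin.cases with
      | zero => simp
      | succ j => simp [hf.hh i j (succ_ne hij)]
  gh := by
    intro i j
    induction i using Fin.cases <;> induction j using Fin.cases <;>
      simp_all [hf.gh]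
  gsq := by
    intro i
    induction i using Fin.cases <;> simp_all [hf.gsq]
  hsq := by
    intro j
    induction j using Fin.cases <;> simp_all [hf.hsq]

/-- Step (p,q) → (q+2,p). -/
theorem stepB (hf : IsACF G H) :
    IsACF (Fin.cons (LZ (1 : A)) (Fin.cons (LX (1 : A)) (fun j => LY (H j))))
      (fun i => LY (G i)) where
  gg := by
    intro i j hij
    induction i using Fin.cases with
    | zero =>
      induction j using Fin.cases with
      | zero => exact absurd rfl hij
      | succ j => induction j using Fin.cases <;> simp
    | succ i =>
      induction i using Fin.cases with
      | zero =>
        induction j using Fin.cases with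
        | zero => simp
        | succ j =>
          induction j using Fin.cases with
          | zero => exact absurd rfl hij
          | succ j => simp
      | succ i =>
        induction j using Fin.cases with
        | zero => simp
        | succ j =>
          induction j using Fin.cases with
          | zero => simp
          | succ j => simp [hf.hh i j (succ_ne (succ_ne hij))]
  hh := by
    intro i j hij
    simp [hf.gg i j hij]
  gh := by
    intro i j
    induction i using Fin.cases with
    | zero => simp
    | succ i => induction i using Fin.cases <;> simp [hf.gh]
  gsq := by
    intro i
    induction i using Fin.cases with
    | zero => simp
    | succ i => induction i using Fin.cases <;> simp [hf.hsq]
  hsq := by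
    intro i; simp [hf.gsq i]

end Steps


section Step8
variable {p q : ℕ} {G : Fin p → A} {H : Fin q → A}

/-- ω = IIIX -/
def sW (a : A) : Matrix (Fin 2) (Fin 2) (Matrix (Fin 2) (Fin 2) (Matrix (Fin 2) (Fin 2) (Matrix (Fin 2) (Fin 2) A))) :=
  LI (LI (LI (LX a)))

/-- The eight extra negative generators. -/
def C8 : Fin 8 → Matrix (Fin 2) (Fin 2) (Matrix (Fin 2) (Fin 2) (Matrix (Fin 2) (Fin 2) (Matrix (Fin 2) (Fin 2) A)))
  | 0 => LI (LI (LI (LY 1)))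
  | 1 => LI (LI (LY (LZ 1)))
  | 2 => LI (LY (LX (LZ 1)))
  | 3 => LX (LY (LZ (LZ 1)))
  | 4 => LY (LI (LZ (LZ 1)))
  | 5 => LY (LX (LX (LZ 1)))
  | 6 => LY (LZ (LX (LZ 1)))
  | 7 => LZ (LY (LZ (LZ 1)))

theorem C8_anti {k l : Fin 8} (h : k ≠ l) :
    C8 (A := A) k * C8 l = -(C8 l * C8 k) := by
  fin_cases k <;> fin_cases l <;> simp_all [C8]

theorem C8_sq (k : Fin 8) : C8 (A := A) k * C8 k = -1 := by
  fin_cases k <;> simp [C8]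

theorem C8_sW (k : Fin 8) (a : A) : C8 k * sW a = -(sW a * C8 k) := by
  fin_cases k <;> simp [C8, sW]

theorem sW_C8 (k : Fin 8) (a : A) : sW a * C8 k = -(C8 k * sW a) := by
  rw [C8_sW, neg_neg]

theorem castAdd_ne {m n : ℕ} {i j : Fin m} (h : Fin.castAdd n i ≠ Fin.castAdd n j) : i ≠ j :=
  fun e => h (by rw [e])

theorem natAdd_ne {m n : ℕ} {i j : Fin n} (h : Fin.natAdd m i ≠ Fin.natAdd m j) : i ≠ j :=
  fun e => h (by rw [e])

/-- Step (p,q) → (p,8+q). -/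
theorem step8 (hf : IsACF G H) :
    IsACF (fun i => sW (G i)) (Fin.append (C8 (A := A)) (fun j => sW (H j))) where
  gg := by
    intro i j hij
    simp [sW, hf.gg i j hij]
  hh := by
    intro i j hij
    induction i using Fin.addCases with
    | left k =>
      induction j using Fin.addCases with
      | left l =>
        simpa [Fin.append_left] using C8_anti (castAdd_ne hij)
      | right j =>
        simp only [Fin.append_left, Fin.append_right]
        exact C8_sW k (H j)
    | right i =>
      induction j using Fin.addCases with
      | left l =>
        simpa [Fin.append_left, Fin.append_right] using sW_C8 l (H i)
      | right j =>
        simp only [Fin.append_right]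
        simp [sW, hf.hh i j (natAdd_ne hij)]
  gh := by
    intro i j
    induction j using Fin.addCases with
    | left k =>
      simpa [Fin.append_left] using sW_C8 k (G i)
    | right j =>
      simp only [Fin.append_right]
      simp [sW, hf.gh i j]
  gsq := by
    intro i; simp [sW, hf.gsq i]
  hsq := by
    intro j
    induction j using Fin.addCases with
    | left k => simpa [Fin.append_left] using C8_sq (A := A) k
    | right j =>
      simp only [Fin.append_right]
      simp [sW, hf.hsq j]

end Step8

section FamEx

/-- matrix-size equivalence -/
def eM (k : ℕ) : Matrix (Fin 2) (Fin 2) (Matrix (Fin (2^k)) (Fin (2^k)) ℝ) ≃ₐ[ℝ]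
    Matrix (Fin (2^(k+1))) (Fin (2^(k+1))) ℝ :=
  (Matrix.compAlgEquiv (Fin 2) (Fin (2^k)) ℝ ℝ).trans
    (Matrix.reindexAlgEquiv ℝ ℝ (finProdFinEquiv.trans (finCongr (by rw [pow_succ, Nat.mul_comm]))))

theorem IsACF.map {B : Type*} [Ring B] {p q : ℕ} {G : Fin p → A} {H : Fin q → A}
    (hf : IsACF G H) (f : A →+* B) : IsACF (f ∘ G) (f ∘ H) where
  gg := fun i j hij => by simp only [Function.comp_apply, ← map_mul, hf.gg i j hij, map_neg]
  hh := fun i j hij => by simp only [Function.comp_apply, ← map_mul, hf.hh i j hij, map_neg]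
  gh := fun i j => by simp only [Function.comp_apply, ← map_mul, hf.gh i j, map_neg]
  gsq := fun i => by simp only [Function.comp_apply, ← map_mul, hf.gsq i, map_one]
  hsq := fun j => by simp only [Function.comp_apply, ← map_mul, hf.hsq j, map_neg, map_one]

/-- Existence of an anticommuting family of signature (p,q) in 2^n × 2^n real matrices. -/
def FamEx (n p q : ℕ) : Prop :=
  ∃ (G : Fin p → Matrix (Fin (2^n)) (Fin (2^n)) ℝ)
    (H : Fin q → Matrix (Fin (2^n)) (Fin (2^n)) ℝ), IsACF G H

theorem famEx_stepA {k p q : ℕ} (hf : FamEx k p q) : FamEx (k+1) (p+1) (q+1) := by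
  obtain ⟨G, H, hf⟩ := hf
  exact ⟨_, _, (stepA hf).map (eM k).toAlgHom.toRingHom⟩

theorem famEx_stepB {k p q : ℕ} (hf : FamEx k p q) : FamEx (k+1) (q+2) p := by
  obtain ⟨G, H, hf⟩ := hf
  exact ⟨_, _, (stepB hf).map (eM k).toAlgHom.toRingHom⟩

theorem famEx_step8 {k p q : ℕ} (hf : FamEx k p q) : FamEx (k+4) p (8+q) := by
  obtain ⟨G, H, hf⟩ := hf
  have E : Matrix (Fin 2) (Fin 2) (Matrix (Fin 2) (Fin 2) (Matrix (Fin 2) (Fin 2)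
      (Matrix (Fin 2) (Fin 2) (Matrix (Fin (2^k)) (Fin (2^k)) ℝ)))) ≃ₐ[ℝ]
      Matrix (Fin (2^(k+4))) (Fin (2^(k+4))) ℝ :=
    ((eM k).mapMatrix.mapMatrix.mapMatrix).trans
      (((eM (k+1)).mapMatrix.mapMatrix).trans (((eM (k+2)).mapMatrix).trans (eM (k+3))))
  exact ⟨_, _, (step8 hf).map E.toAlgHom.toRingHom⟩

theorem famEx_base10 : FamEx 0 1 0 :=
  ⟨_, _, base10 (A := Matrix (Fin (2^0)) (Fin (2^0)) ℝ)⟩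

theorem famEx_base07 : FamEx 3 0 7 := by
  have E : Matrix (Fin 2) (Fin 2) (Matrix (Fin 2) (Fin 2) (Matrix (Fin 2) (Fin 2)
      (Matrix (Fin (2^0)) (Fin (2^0)) ℝ))) ≃ₐ[ℝ] Matrix (Fin (2^3)) (Fin (2^3)) ℝ :=
    ((eM 0).mapMatrix.mapMatrix).trans (((eM 1).mapMatrix).trans (eM 2))
  exact ⟨_, _, (base07 (A := Matrix (Fin (2^0)) (Fin (2^0)) ℝ)).map E.toAlgHom.toRingHom⟩

theorem famEx_all : ∀ n p q : ℕ, p + q = 2*n+1 → (8:ℤ) ∣ ((p:ℤ) - q - 1) → FamEx n p q := by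
  intro n
  induction n using Nat.strong_induction_on with
  | _ n IH =>
    intro p q h hdvd
    rcases Nat.eq_zero_or_pos p with hp | hp
    · subst hp
      rcases eq_or_ne q 7 with hq | hq
      · subst hq
        obtain rfl : n = 3 := by omega
        exact famEx_base07
      · -- q ≥ 15
        have hq15 : 15 ≤ q := by omega
        obtain ⟨m, rfl⟩ : ∃ m, n = m + 4 := ⟨n - 4, by omega⟩
        obtain ⟨q', rfl⟩ : ∃ q', q = 8 + q' := ⟨q - 8, by omega⟩
        exact famEx_step8 (IH m (by omega) 0 q' (by omega) (by omega))
    · rcases Nat.eq_zero_or_pos q with hq | hq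
      · subst hq
        rcases eq_or_ne p 1 with hp1 | hp1
        · subst hp1
          obtain rfl : n = 0 := by omega
          exact famEx_base10
        · -- p ≥ 9
          have hp9 : 9 ≤ p := by omega
          obtain ⟨m, rfl⟩ : ∃ m, n = m + 1 := ⟨n - 1, by omega⟩
          obtain ⟨p', rfl⟩ : ∃ p', p = p' + 2 := ⟨p - 2, by omega⟩
          exact famEx_stepB (IH m (by omega) 0 p' (by omega) (by omega))
      · obtain ⟨m, rfl⟩ : ∃ m, n = m + 1 := ⟨n - 1, by omega⟩
        obtain ⟨p', rfl⟩ : ∃ p', p = p' + 1 := ⟨p - 1, by omega⟩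
        obtain ⟨q', rfl⟩ : ∃ q', q = q' + 1 := ⟨q - 1, by omega⟩
        exact famEx_stepA (IH m (by omega) p' q' (by omega) (by omega))

end FamEx

section Words
variable {B : Type*} [Ring B] [Algebra ℝ B] {m : ℕ}

/-- A gamma system. -/
structure IsGamma (γ : Fin m → B) (ε : Fin m → ℝ) : Prop where
  anti : ∀ i j, i ≠ j → γ i * γ j = -(γ j * γ i)
  sq : ∀ i, γ i * γ i = ε i • 1
  unit : ∀ i, ε i = 1 ∨ ε i = -1

/-- Product of a word of generators. -/
def Wrd (γ : Fin m → B) (w : List (Fin m)) : B := (w.map γ).prod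

theorem Wrd_nil (γ : Fin m → B) : Wrd γ [] = 1 := rfl

theorem Wrd_cons (γ : Fin m → B) (i : Fin m) (w : List (Fin m)) :
    Wrd γ (i :: w) = γ i * Wrd γ w := by simp [Wrd]

theorem Wrd_single (γ : Fin m → B) (i : Fin m) : Wrd γ [i] = γ i := by simp [Wrd]

theorem Wrd_append (γ : Fin m → B) (w w' : List (Fin m)) :
    Wrd γ (w ++ w') = Wrd γ w * Wrd γ w' := by simp [Wrd]

variable {γ : Fin m → B} {ε : Fin m → ℝ}

theorem Wrd_move (hγ : IsGamma γ ε) (i : Fin m) :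
    ∀ w : List (Fin m), γ i * Wrd γ w =
      ((-1 : ℝ) ^ (w.length + w.count i)) • (Wrd γ w * γ i)
  | [] => by simp [Wrd]
  | (j :: w) => by
    rcases eq_or_ne i j with rfl | hij
    · have he : (-1 : ℝ) ^ ((i :: w).length + (i :: w).count i)
          = (-1 : ℝ) ^ (w.length + w.count i) := by
        rw [show (i :: w).length + (i :: w).count i = (w.length + w.count i) + 2 by
          simp [List.count_cons]; omega, pow_add]
        norm_num
      have hrev : Wrd γ w * γ i = ((-1 : ℝ) ^ (w.length + w.count i)) • (γ i * Wrd γ w) := by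
        rw [Wrd_move hγ i w, smul_smul, ← pow_add, ← two_mul, pow_mul]; norm_num
      rw [he, Wrd_cons, mul_assoc, hrev, mul_smul_comm, smul_smul, ← pow_add, ← two_mul, pow_mul]
      norm_num
    · have he : (-1 : ℝ) ^ ((j :: w).length + (j :: w).count i)
          = -((-1 : ℝ) ^ (w.length + w.count i)) := by
        rw [show (j :: w).length + (j :: w).count i = (w.length + w.count i) + 1 by
          simp [List.count_cons, hij, Ne.symm hij]; omega, pow_succ]
        ring
      rw [he, Wrd_cons, ← mul_assoc, hγ.anti i j hij, neg_mul, mul_assoc,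
        Wrd_move hγ i w, mul_smul_comm, neg_smul]
      simp [mul_assoc]

theorem Wrd_sq (hγ : IsGamma γ ε) :
    ∀ w : List (Fin m), w.Nodup → ∃ c : ℝ, c ≠ 0 ∧ Wrd γ w * Wrd γ w = c • 1
  | [], _ => ⟨1, one_ne_zero, by simp [Wrd]⟩
  | (i :: w), hnd => by
    obtain ⟨hi, hw⟩ := List.nodup_cons.mp hnd
    obtain ⟨c, hc, he⟩ := Wrd_sq hγ w hw
    have hcount : w.count i = 0 := List.count_eq_zero_of_not_mem hi
    have hmove : Wrd γ w * γ i = ((-1 : ℝ) ^ w.length) • (γ i * Wrd γ w) := by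
      have h1 := Wrd_move hγ i w
      rw [hcount, Nat.add_zero] at h1
      rw [h1, smul_smul, ← pow_add, ← two_mul, pow_mul]
      norm_num
    have hε : ε i ≠ 0 := by rcases hγ.unit i with h | h <;> rw [h] <;> norm_num
    refine ⟨(-1 : ℝ) ^ w.length * (ε i * c),
      mul_ne_zero (pow_ne_zero _ (by norm_num)) (mul_ne_zero hε hc), ?_⟩
    calc Wrd γ (i :: w) * Wrd γ (i :: w)
        = γ i * ((Wrd γ w * γ i) * Wrd γ w) := by
          rw [Wrd_cons, mul_assoc, ← mul_assoc (Wrd γ w)]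
      _ = γ i * ((((-1 : ℝ) ^ w.length) • (γ i * Wrd γ w)) * Wrd γ w) := by rw [hmove]
      _ = ((-1 : ℝ) ^ w.length) • (γ i * ((γ i * Wrd γ w) * Wrd γ w)) := by
          rw [smul_mul_assoc, mul_smul_comm]
      _ = ((-1 : ℝ) ^ w.length) • (γ i * γ i * (Wrd γ w * Wrd γ w)) := by
          rw [mul_assoc (γ i) (Wrd γ w), ← mul_assoc]
      _ = ((-1 : ℝ) ^ w.length) • ((ε i • (1 : B)) * (c • (1 : B))) := by rw [hγ.sq, he]
      _ = ((-1 : ℝ) ^ w.length * (ε i * c)) • 1 := by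
          rw [smul_mul_assoc, one_mul, smul_smul, smul_smul, mul_assoc]

theorem Wrd_reduce (hγ : IsGamma γ ε) (i : Fin m) :
    ∀ l : List (Fin m), l.Pairwise (· < ·) →
      ∃ (c : ℝ) (l' : List (Fin m)), l'.Pairwise (· < ·) ∧ (∀ x ∈ l', x = i ∨ x ∈ l) ∧
        γ i * Wrd γ l = c • Wrd γ l'
  | [], _ => ⟨1, [i], List.pairwise_singleton _ i, by simp, by simp [Wrd]⟩
  | (j :: t), hsort => by
    have hjt : ∀ b ∈ t, j < b := (List.pairwise_cons.mp hsort).1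
    have ht : t.Pairwise (· < ·) := (List.pairwise_cons.mp hsort).2
    rcases lt_trichotomy i j with hij | rfl | hij
    · refine ⟨1, i :: j :: t, List.pairwise_cons.mpr ⟨?_, hsort⟩, ?_, by simp [Wrd_cons]⟩
      · intro b hb
        rcases List.mem_cons.mp hb with rfl | hb
        · exact hij
        · exact lt_trans hij (hjt b hb)
      · intro x hx
        rcases List.mem_cons.mp hx with rfl | hx
        · exact Or.inl rfl
        · exact Or.inr hx
    · refine ⟨ε i, t, ht, fun x hx => Or.inr (List.mem_cons_of_mem _ hx), ?_⟩
      rw [Wrd_cons, ← mul_assoc, hγ.sq i, smul_mul_assoc, one_mul]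
    · obtain ⟨c, t', ht', hmem, he⟩ := Wrd_reduce hγ i t ht
      have hne : i ≠ j := ne_of_gt hij
      refine ⟨-c, j :: t', List.pairwise_cons.mpr ⟨?_, ht'⟩, ?_, ?_⟩
      · intro b hb
        rcases hmem b hb with rfl | hb
        · exact hij
        · exact hjt b hb
      · intro x hx
        rcases List.mem_cons.mp hx with rfl | hx
        · exact Or.inr List.mem_cons_self
        · rcases hmem x hx with rfl | h
          · exact Or.inl rfl
          · exact Or.inr (List.mem_cons_of_mem _ h)
      · rw [Wrd_cons, Wrd_cons, ← mul_assoc, hγ.anti i j hne, neg_mul, mul_assoc, he,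
          mul_smul_comm, ← neg_smul]

/-- The distinguished spanning family indexed by finsets. -/
noncomputable def Efam (γ : Fin m → B) (s : Finset (Fin m)) : B :=
  Wrd γ (s.sort (· ≤ ·))

theorem Wrd_mem_span (hγ : IsGamma γ ε) :
    ∀ w : List (Fin m), Wrd γ w ∈ Submodule.span ℝ (Set.range (Efam γ))
  | [] => Submodule.subset_span ⟨∅, by simp [Efam, Finset.sort_empty, Wrd]⟩
  | (i :: w) => by
    rw [Wrd_cons]
    have hw := Wrd_mem_span hγ w
    refine Submodule.span_induction (p := fun x _ => γ i * x ∈ Submodule.span ℝ (Set.range (Efam γ)))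
      ?_ (by simp) ?_ ?_ hw
    · intro x hx
      obtain ⟨s, rfl⟩ := hx
      obtain ⟨c, l', hsort, -, he⟩ := Wrd_reduce hγ i (s.sort (· ≤ ·)) (Finset.sortedLT_sort s).pairwise
      show γ i * Wrd γ (s.sort (· ≤ ·)) ∈ _
      rw [he]
      refine Submodule.smul_mem _ _ (Submodule.subset_span ⟨l'.toFinset, ?_⟩)
      show Wrd γ (l'.toFinset.sort (· ≤ ·)) = Wrd γ l'
      rw [(List.toFinset_sort (· ≤ ·) hsort.nodup).mpr (hsort.imp le_of_lt)]
    · intro x y _ _ hx hy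
      show γ i * (x + y) ∈ _
      rw [mul_add]
      exact Submodule.add_mem _ hx hy
    · intro a x _ hx
      show γ i * (a • x) ∈ _
      rw [mul_smul_comm]
      exact Submodule.smul_mem _ _ hx

end Words

section CliffordSide
variable (p q : ℕ)

/-- sign pattern -/
def εsgn : Fin (p+q) → ℝ := fun i => if (i : ℕ) < p then 1 else -1

theorem εsgn_unit (i : Fin (p+q)) : εsgn p q i = 1 ∨ εsgn p q i = -1 := by
  unfold εsgn; split <;> simp

noncomputable def Qpq' : QuadraticForm ℝ (Fin (p + q) → ℝ) :=
  QuadraticMap.weightedSumSquares ℝ (εsgn p q)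

/-- Clifford generators -/
noncomputable def γC : Fin (p+q) → CliffordAlgebra (Qpq' p q) := fun i =>
  CliffordAlgebra.ι (Qpq' p q) (Pi.single i 1)

theorem Qpq'_single (i : Fin (p+q)) : Qpq' p q (Pi.single i 1) = εsgn p q i := by
  rw [Qpq', QuadraticMap.weightedSumSquares_apply]
  rw [show ∑ j, εsgn p q j • (Pi.single (M := fun _ => ℝ) i 1 j * Pi.single (M := fun _ => ℝ) i 1 j)
      = ∑ j, if j = i then εsgn p q i else 0 from Finset.sum_congr rfl fun j _ => ?_]
  · simp
  · rcases eq_or_ne j i with rfl | hji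
    · simp
    · simp [Pi.single_eq_of_ne hji, hji]

theorem polar_single {i j : Fin (p+q)} (hij : i ≠ j) :
    QuadraticMap.polar (Qpq' p q) (Pi.single i 1) (Pi.single j 1) = 0 := by
  rw [QuadraticMap.polar, Qpq', QuadraticMap.weightedSumSquares_apply,
    QuadraticMap.weightedSumSquares_apply, QuadraticMap.weightedSumSquares_apply,
    ← Finset.sum_sub_distrib, ← Finset.sum_sub_distrib]
  refine Finset.sum_eq_zero fun k _ => ?_
  rcases eq_or_ne k i with rfl | hki
  · simp [Pi.single_eq_same, Pi.single_eq_of_ne hij]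
  · rcases eq_or_ne k j with rfl | hkj
    · simp [Pi.single_eq_same, Pi.single_eq_of_ne hki]
    · simp [Pi.single_eq_of_ne hki, Pi.single_eq_of_ne hkj]

theorem isGamma_γC : IsGamma (γC p q) (εsgn p q) where
  anti := by
    intro i j hij
    have h2 := CliffordAlgebra.ι_mul_ι_add_swap (Q := Qpq' p q) (Pi.single i 1) (Pi.single j 1)
    rw [polar_single p q hij, map_zero] at h2
    exact eq_neg_of_add_eq_zero_left h2
  sq := by
    intro i
    rw [γC, CliffordAlgebra.ι_sq_scalar, Qpq'_single, Algebra.algebraMap_eq_smul_one]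
  unit := εsgn_unit p q

theorem cl_span (x : CliffordAlgebra (Qpq' p q)) :
    x ∈ Submodule.span ℝ (Set.range (Efam (γC p q))) := by
  induction x using CliffordAlgebra.induction with
  | algebraMap r =>
    rw [Algebra.algebraMap_eq_smul_one]
    exact Submodule.smul_mem _ _ (by simpa [Wrd_nil] using Wrd_mem_span (isGamma_γC p q) [])
  | ι v =>
    have hv : v = ∑ i, v i • (Pi.single i 1 : Fin (p+q) → ℝ) := by
      funext j
      rw [Finset.sum_apply]
      have hterm : ∀ i ∈ Finset.univ,
          (v i • (Pi.single i 1 : Fin (p+q) → ℝ)) j = if j = i then v j else 0 := by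
        intro i _
        rcases eq_or_ne j i with rfl | hji
        · simp
        · simp [Pi.single_eq_of_ne hji, hji]
      rw [Finset.sum_congr rfl hterm]
      simp
    rw [hv, map_sum]
    refine Submodule.sum_mem _ fun i _ => ?_
    rw [map_smul]
    refine Submodule.smul_mem _ _ ?_
    simpa [Wrd_single, γC] using Wrd_mem_span (isGamma_γC p q) [i]
  | mul x y hx hy =>
    have hxy := Submodule.mul_mem_mul hx hy
    rw [Submodule.span_mul_span] at hxy
    refine Submodule.span_le.mpr ?_ hxy
    rintro z ⟨a, ⟨s, rfl⟩, b, ⟨t, rfl⟩, rfl⟩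
    show Efam (γC p q) s * Efam (γC p q) t ∈ _
    rw [Efam, Efam, ← Wrd_append]
    exact Wrd_mem_span (isGamma_γC p q) _
  | add x y hx hy => exact Submodule.add_mem _ hx hy

end CliffordSide

section MatrixSide
variable {n : ℕ} (p q : ℕ)
  (G : Fin p → Matrix (Fin (2^n)) (Fin (2^n)) ℝ)
  (H : Fin q → Matrix (Fin (2^n)) (Fin (2^n)) ℝ)

def gfun : Fin (p+q) → Matrix (Fin (2^n)) (Fin (2^n)) ℝ := fun i =>
  if h' : (i : ℕ) < p then G ⟨i, h'⟩ else H ⟨(i : ℕ) - p, by have := i.isLt; omega⟩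

def γP : Fin (p+q) →
    (Matrix (Fin (2^n)) (Fin (2^n)) ℝ × Matrix (Fin (2^n)) (Fin (2^n)) ℝ) :=
  fun i => (gfun p q G H i, -(gfun p q G H i))

variable {p q G H}

theorem gfun_anti (hf : IsACF G H) {i j : Fin (p+q)} (hij : i ≠ j) :
    gfun p q G H i * gfun p q G H j = -(gfun p q G H j * gfun p q G H i) := by
  have hv : (i : ℕ) ≠ (j : ℕ) := fun e => hij (Fin.ext e)
  unfold gfun
  by_cases hi : (i : ℕ) < p <;> by_cases hj : (j : ℕ) < p
  · rw [dif_pos hi, dif_pos hj]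
    exact hf.gg _ _ (by simp only [ne_eq, Fin.mk.injEq]; omega)
  · rw [dif_pos hi, dif_neg hj]
    exact hf.gh _ _
  · rw [dif_neg hi, dif_pos hj, hf.gh ⟨(j : ℕ), hj⟩ ⟨(i : ℕ) - p, by have := i.isLt; omega⟩,
      neg_neg]
  · rw [dif_neg hi, dif_neg hj]
    exact hf.hh _ _ (by simp only [ne_eq, Fin.mk.injEq]; omega)

theorem gfun_sq (hf : IsACF G H) (i : Fin (p+q)) :
    gfun p q G H i * gfun p q G H i = (εsgn p q i) • 1 := by
  unfold gfun εsgn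
  by_cases hi : (i : ℕ) < p
  · rw [dif_pos hi, if_pos hi, hf.gsq, one_smul]
  · rw [dif_neg hi, if_neg hi, hf.hsq, neg_smul, one_smul]

theorem isGamma_γP (hf : IsACF G H) : IsGamma (γP p q G H) (εsgn p q) where
  anti := by
    intro i j hij
    have h1 := gfun_anti hf hij
    simp only [γP, Prod.mk_mul_mk, neg_mul_neg, Prod.neg_mk, h1]
  sq := by
    intro i
    have h1 := gfun_sq hf i
    refine Prod.ext_iff.mpr ⟨?_, ?_⟩ <;>
      simp [γP, h1, Prod.fst_one, Prod.snd_one]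
  unit := εsgn_unit p q

theorem Wrd_γP (hf : IsACF G H) (w : List (Fin (p+q))) :
    Wrd (γP p q G H) w =
      (Wrd (gfun p q G H) w, ((-1 : ℝ) ^ w.length) • Wrd (gfun p q G H) w) := by
  induction w with
  | nil => refine Prod.ext_iff.mpr ⟨?_, ?_⟩ <;> simp [Wrd_nil]
  | cons i w ih =>
    rw [Wrd_cons, Wrd_cons, ih]
    refine Prod.ext_iff.mpr ⟨?_, ?_⟩ <;>
      simp [γP, pow_succ, mul_smul_comm, neg_mul, neg_smul, smul_smul, mul_comm]

/-- the trace functional -/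
noncomputable def τmap (n : ℕ) :
    (Matrix (Fin (2^n)) (Fin (2^n)) ℝ × Matrix (Fin (2^n)) (Fin (2^n)) ℝ) →ₗ[ℝ] ℝ :=
  (Matrix.traceLinearMap (Fin (2^n)) ℝ ℝ).comp (LinearMap.fst ℝ _ _) +
    (Matrix.traceLinearMap (Fin (2^n)) ℝ ℝ).comp (LinearMap.snd ℝ _ _)

theorem τmap_apply (x : Matrix (Fin (2^n)) (Fin (2^n)) ℝ × Matrix (Fin (2^n)) (Fin (2^n)) ℝ) :
    τmap n x = x.1.trace + x.2.trace := rfl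

theorem τ_comm (x y : Matrix (Fin (2^n)) (Fin (2^n)) ℝ × Matrix (Fin (2^n)) (Fin (2^n)) ℝ) :
    τmap n (x * y) = τmap n (y * x) := by
  simp only [τmap_apply, Prod.fst_mul, Prod.snd_mul]
  rw [Matrix.trace_mul_comm, Matrix.trace_mul_comm x.2 y.2]

theorem τ_odd (hf : IsACF G H) (w : List (Fin (p+q))) (hodd : Odd w.length) :
    τmap n (Wrd (γP p q G H) w) = 0 := by
  rw [Wrd_γP hf, τmap_apply]
  simp [hodd.neg_one_pow]

theorem tau_EE (hf : IsACF G H) {s t : Finset (Fin (p+q))} (hst : s ≠ t) :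
    τmap n (Efam (γP p q G H) s * Efam (γP p q G H) t) = 0 := by
  have hγ := isGamma_γP hf
  rw [Efam, Efam, ← Wrd_append]
  set w := s.sort (· ≤ ·) ++ t.sort (· ≤ ·) with hw
  rcases Nat.even_or_odd w.length with heven | hodd
  · obtain ⟨i, hi⟩ : ∃ i, ¬(i ∈ s ↔ i ∈ t) := by
      by_contra hall
      push_neg at hall
      exact hst (Finset.ext fun i => (hall i))
    have hcount : w.count i = 1 := by
      rw [hw, List.count_append]
      by_cases his : i ∈ s
      · have hit : i ∉ t := fun ht => hi ⟨fun _ => ht, fun _ => his⟩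
        rw [List.count_eq_one_of_mem (Finset.sort_nodup _ _) ((Finset.mem_sort _).mpr his),
          List.count_eq_zero_of_not_mem (fun hmem => hit ((Finset.mem_sort _).mp hmem))]
      · have hit : i ∈ t := by tauto
        rw [List.count_eq_zero_of_not_mem (fun hmem => his ((Finset.mem_sort _).mp hmem)),
          List.count_eq_one_of_mem (Finset.sort_nodup _ _) ((Finset.mem_sort _).mpr hit)]
    have hmv : γP p q G H i * Wrd (γP p q G H) w = -(Wrd (γP p q G H) w * γP p q G H i) := by
      rw [Wrd_move hγ i w, hcount, (heven.add_one).neg_one_pow, neg_one_smul]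
    have e1 : τmap n (Wrd (γP p q G H) w * (γP p q G H i * γP p q G H i))
        = εsgn p q i * τmap n (Wrd (γP p q G H) w) := by
      rw [hγ.sq i, mul_smul_comm, mul_one, map_smul, smul_eq_mul]
    have e2 : τmap n (Wrd (γP p q G H) w * (γP p q G H i * γP p q G H i))
        = -(εsgn p q i * τmap n (Wrd (γP p q G H) w)) := by
      calc τmap n (Wrd (γP p q G H) w * (γP p q G H i * γP p q G H i))
          = τmap n ((Wrd (γP p q G H) w * γP p q G H i) * γP p q G H i) := by rw [mul_assoc]
        _ = τmap n (γP p q G H i * (Wrd (γP p q G H) w * γP p q G H i)) :=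
            τ_comm _ _
        _ = τmap n ((γP p q G H i * Wrd (γP p q G H) w) * γP p q G H i) := by rw [← mul_assoc]
        _ = τmap n (-((Wrd (γP p q G H) w * γP p q G H i) * γP p q G H i)) := by
            rw [hmv, neg_mul]
        _ = -(εsgn p q i * τmap n (Wrd (γP p q G H) w)) := by rw [map_neg, mul_assoc, e1]
    have e3 : εsgn p q i * τmap n (Wrd (γP p q G H) w) = 0 := by
      have := e1.symm.trans e2
      linarith
    rcases εsgn_unit p q i with h1 | h1 <;> rw [h1] at e3 <;> linarith
  · exact τ_odd hf w hodd

end MatrixSide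

section Assembly

theorem map_Wrd {B C : Type*} [Ring B] [Ring C] [Algebra ℝ B] [Algebra ℝ C]
    (f : B →ₐ[ℝ] C) {m : ℕ} (γ : Fin m → B) (w : List (Fin m)) :
    f (Wrd γ w) = Wrd (fun i => f (γ i)) w := by
  rw [Wrd, Wrd, map_list_prod, List.map_map]
  rfl

variable {n : ℕ} {p q : ℕ}

abbrev MP (n : ℕ) :=
  Matrix (Fin (2^n)) (Fin (2^n)) ℝ × Matrix (Fin (2^n)) (Fin (2^n)) ℝ

variable {G : Fin p → Matrix (Fin (2^n)) (Fin (2^n)) ℝ}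
  {H : Fin q → Matrix (Fin (2^n)) (Fin (2^n)) ℝ}

noncomputable def flin (p q : ℕ) (G : Fin p → Matrix (Fin (2^n)) (Fin (2^n)) ℝ)
    (H : Fin q → Matrix (Fin (2^n)) (Fin (2^n)) ℝ) : (Fin (p+q) → ℝ) →ₗ[ℝ] MP n :=
  ∑ i, LinearMap.smulRight (LinearMap.proj i) (γP p q G H i)

theorem flin_apply (v : Fin (p+q) → ℝ) :
    flin p q G H v = ∑ i, v i • γP p q G H i := by
  simp [flin, LinearMap.sum_apply, LinearMap.smulRight_apply, LinearMap.proj_apply]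

theorem flin_sq (hf : IsACF G H) (v : Fin (p+q) → ℝ) :
    flin p q G H v * flin p q G H v = algebraMap ℝ (MP n) (Qpq' p q v) := by
  have hγ := isGamma_γP hf
  have hmulsum : flin p q G H v * flin p q G H v
      = ∑ i, ∑ j, (v i * v j) • (γP p q G H i * γP p q G H j) := by
    rw [flin_apply, Finset.sum_mul_sum]
    exact Finset.sum_congr rfl fun i _ => Finset.sum_congr rfl fun j _ =>
      smul_mul_smul_comm _ _ _ _
  have key : ∀ i j, (v i * v j) • (γP p q G H i * γP p q G H j)
      + (v j * v i) • (γP p q G H j * γP p q G H i)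
      = if i = j then (2 * (εsgn p q i * (v i * v i))) • (1 : MP n) else 0 := by
    intro i j
    rcases eq_or_ne i j with rfl | hij
    · rw [if_pos rfl, hγ.sq i, smul_smul, ← add_smul]
      congr 1
      ring
    · rw [if_neg hij, hγ.anti i j hij, smul_neg, mul_comm (v j) (v i), neg_add_cancel]
  have hdbl : flin p q G H v * flin p q G H v + flin p q G H v * flin p q G H v
      = ∑ i, (2 * (εsgn p q i * (v i * v i))) • (1 : MP n) := by
    nth_rewrite 1 [hmulsum]
    nth_rewrite 1 [hmulsum]
    nth_rewrite 2 [Finset.sum_comm]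
    rw [← Finset.sum_add_distrib]
    refine Finset.sum_congr rfl fun i _ => ?_
    rw [← Finset.sum_add_distrib, Finset.sum_congr rfl fun j _ => key i j,
      Finset.sum_ite_eq]
    simp
  have hQ : Qpq' p q v = ∑ i, εsgn p q i * (v i * v i) := by
    rw [Qpq', QuadraticMap.weightedSumSquares_apply]
    simp [smul_eq_mul]
  have h2T : (2:ℝ) • (flin p q G H v * flin p q G H v)
      = (2:ℝ) • ((Qpq' p q v) • (1 : MP n)) := by
    rw [two_smul, two_smul, hdbl, hQ, ← add_smul, ← two_mul, Finset.mul_sum,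
      ← Finset.sum_smul]
  have hT : flin p q G H v * flin p q G H v = (Qpq' p q v) • (1 : MP n) := by
    have h := congrArg (fun x => (2:ℝ)⁻¹ • x) h2T
    simpa [smul_smul, inv_mul_cancel₀ (two_ne_zero (α := ℝ))] using h
  rw [hT, Algebra.algebraMap_eq_smul_one]

noncomputable def Φmap (hf : IsACF G H) : CliffordAlgebra (Qpq' p q) →ₐ[ℝ] MP n :=
  CliffordAlgebra.lift (Qpq' p q) ⟨flin p q G H, flin_sq hf⟩

theorem Φmap_γC (hf : IsACF G H) (i : Fin (p+q)) :
    Φmap hf (γC p q i) = γP p q G H i := by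
  rw [Φmap, γC, CliffordAlgebra.lift_ι_apply, flin_apply]
  have hterm : ∀ j ∈ Finset.univ,
      (Pi.single (M := fun _ : Fin (p+q) => ℝ) i 1 j) • γP p q G H j = if j = i then γP p q G H i else 0 := by
    intro j _
    rcases eq_or_ne j i with rfl | hji
    · simp
    · simp [Pi.single_eq_of_ne hji, hji]
  rw [Finset.sum_congr rfl hterm]
  simp

theorem Φmap_Efam (hf : IsACF G H) (s : Finset (Fin (p+q))) :
    Φmap hf (Efam (γC p q) s) = Efam (γP p q G H) s := by
  rw [Efam, Efam, map_Wrd]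
  have he : (fun i => Φmap hf (γC p q i)) = γP p q G H := funext (Φmap_γC hf)
  rw [he]

theorem Efam_li (hf : IsACF G H) : LinearIndependent ℝ (Efam (γP p q G H)) := by
  rw [Fintype.linearIndependent_iff]
  intro c hc t
  have hγ := isGamma_γP hf
  obtain ⟨cτ, hcτ, hsq⟩ := Wrd_sq hγ (t.sort (· ≤ ·)) (Finset.sort_nodup _ _)
  have htr1 : τmap n (1 : MP n) = (2^n : ℝ) + 2^n := by
    rw [τmap_apply, Prod.fst_one, Prod.snd_one, Matrix.trace_one]
    simp
  have hEt : τmap n (Efam (γP p q G H) t * Efam (γP p q G H) t) = cτ * ((2^n : ℝ) + 2^n) := by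
    rw [Efam, hsq, map_smul, smul_eq_mul, htr1]
  have happ : τmap n ((∑ s, c s • Efam (γP p q G H) s) * Efam (γP p q G H) t) = 0 := by
    rw [hc, zero_mul, map_zero]
  rw [Finset.sum_mul, map_sum,
    Finset.sum_eq_single t
      (fun s _ hst => by rw [smul_mul_assoc, map_smul, tau_EE hf hst, smul_zero])
      (by simp)] at happ
  rw [smul_mul_assoc, map_smul, hEt, smul_eq_mul] at happ
  have h2n : (0:ℝ) < (2^n : ℝ) + 2^n := by positivity
  exact (mul_eq_zero.mp happ).resolve_right (mul_ne_zero hcτ h2n.ne')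

theorem finrank_MP (hpq : p + q = 2*n+1) : Module.finrank ℝ (MP n) = 2^(p+q) := by
  rw [Module.finrank_prod, Module.finrank_matrix, Fintype.card_fin, Module.finrank_self,
    hpq, mul_one, ← pow_add, show 2*n+1 = (n+n)+1 by ring, pow_succ, Nat.mul_two]

theorem Φ_surj (hpq : p + q = 2*n+1) (hf : IsACF G H) :
    Function.Surjective (Φmap hf) := by
  have hsp : Submodule.span ℝ (Set.range (Efam (γP p q G H))) = ⊤ := by
    apply Submodule.eq_top_of_finrank_eq
    rw [finrank_span_eq_card (Efam_li hf), Fintype.card_finset, Fintype.card_fin,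
      finrank_MP hpq]
  intro x
  have hx : x ∈ Submodule.span ℝ (Set.range (Efam (γP p q G H))) := hsp ▸ Submodule.mem_top
  have hle : Submodule.span ℝ (Set.range (Efam (γP p q G H)))
      ≤ Subalgebra.toSubmodule (Φmap hf).range := by
    rw [Submodule.span_le]
    rintro y ⟨s, rfl⟩
    exact ⟨Efam (γC p q) s, Φmap_Efam hf s⟩
  obtain ⟨y, hy⟩ := hle hx
  exact ⟨y, hy⟩

theorem Φ_inj (hpq : p + q = 2*n+1) (hf : IsACF G H) :
    Function.Injective (Φmap hf) := by
  classical
  have hspan : Submodule.span ℝ (Set.range (Efam (γC p q))) = ⊤ :=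
    eq_top_iff.mpr (fun x _ => cl_span p q x)
  haveI : Module.Finite ℝ (CliffordAlgebra (Qpq' p q)) := by
    rw [Module.finite_def, ← hspan]
    exact Submodule.fg_span (Set.finite_range _)
  have hdim_le : Module.finrank ℝ (CliffordAlgebra (Qpq' p q)) ≤ 2^(p+q) := by
    letI : Fintype ↑(Set.range (Efam (γC p q))) := Set.fintypeRange _
    have h1 := finrank_span_le_card (R := ℝ) (Set.range (Efam (γC p q)))
    rw [hspan, finrank_top] at h1
    refine h1.trans ?_
    rw [Set.toFinset_range]
    refine (Finset.card_image_le).trans ?_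
    simp [Fintype.card_finset]
  have hrank := LinearMap.finrank_range_add_finrank_ker (Φmap hf).toLinearMap
  have hrange : LinearMap.range (Φmap hf).toLinearMap = ⊤ :=
    LinearMap.range_eq_top.mpr (Φ_surj hpq hf)
  rw [hrange, finrank_top] at hrank
  have heq : Module.finrank ℝ (CliffordAlgebra (Qpq' p q)) = Module.finrank ℝ (MP n) := by
    rw [finrank_MP hpq] at hrank ⊢
    omega
  have hsurj2 : Function.Surjective ((Φmap hf).toLinearMap) := Φ_surj hpq hf
  exact (LinearMap.injective_iff_surjective_of_finrank_eq_finrank heq).mpr hsurj2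

theorem iso_of_fam (hpq : p + q = 2*n+1) (hf : IsACF G H) :
    Nonempty (CliffordAlgebra (Qpq' p q) ≃ₐ[ℝ] MP n) :=
  ⟨AlgEquiv.ofBijective (Φmap hf) ⟨Φ_inj hpq hf, Φ_surj hpq hf⟩⟩

end Assembly

end CliffProof




theorem clifford_iso_prod_matrix_real (p q n : ℕ) (h : p + q = 2 * n + 1)
    (hc : ((p : ℤ) - q + 1) ≡ 2 [ZMOD 8]) :
    Nonempty (CliffordAlgebra (Qpq p q) ≃ₐ[ℝ]
      (Matrix (Fin (2 ^ n)) (Fin (2 ^ n)) ℝ × Matrix (Fin (2 ^ n)) (Fin (2 ^ n)) ℝ)) := by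
  have hdvd : (8:ℤ) ∣ ((p:ℤ) - q - 1) := by
    have h8 := hc.dvd
    omega
  obtain ⟨G, H, hf⟩ := CliffProof.famEx_all n p q h hdvd
  exact CliffProof.iso_of_fam h hf
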